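/- (Shen–Yu monotone improvement) Let X ⊆ ℝⁿ, N_m : X → ℝ nonnegative, D_m : X → ℝ positive, and g(x, y) = Σ_{m=1}^M (2 y_m √(N_m(x)) − y_m² D_m(x)). Fix x₀ ∈ X and set y⁰_m = √(N_m(x₀))/D_m(x₀). If x* ∈ X satisfies g(x*, y⁰) ≥ g(x, y⁰) for all x ∈ X, then Σ_m N_m(x*)/D_m(x*) ≥ Σ_m N_m(x₀)/D_m(x₀). -/

import Mathlib

theorem shen_yu_improvement
    (n M : ℕ) (X : Set (Fin n → ℝ))
    (N D : Fin M → (Fin n → ℝ) → ℝ)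
    (hN : ∀ m, ∀ x ∈ X, 0 ≤ N m x) (hD : ∀ m, ∀ x ∈ X, 0 < D m x)
    (x0 : Fin n → ℝ) (hx0 : x0 ∈ X)
    (y0 : Fin M → ℝ) (hy0 : ∀ m, y0 m = Real.sqrt (N m x0) / D m x0)
    (xstar : Fin n → ℝ) (hxstar : xstar ∈ X)
    (hmax : ∀ x ∈ X,
      ∑ m, (2 * y0 m * Real.sqrt (N m x) - (y0 m) ^ 2 * D m x) ≤
      ∑ m, (2 * y0 m * Real.sqrt (N m xstar) - (y0 m) ^ 2 * D m xstar)) :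
    ∑ m, N m x0 / D m x0 ≤ ∑ m, N m xstar / D m xstar := by
  have h1 : ∑ m, N m x0 / D m x0 =
      ∑ m, (2 * y0 m * Real.sqrt (N m x0) - (y0 m) ^ 2 * D m x0) := by
    refine Finset.sum_congr rfl fun m _ => ?_
    have hd := hD m x0 hx0
    have hs : Real.sqrt (N m x0) ^ 2 = N m x0 := Real.sq_sqrt (hN m x0 hx0)
    rw [hy0 m]
    rw [div_pow, hs]
    field_simp
    linear_combination -2 * hs
  have h2 : ∑ m, (2 * y0 m * Real.sqrt (N m xstar) - (y0 m) ^ 2 * D m xstar) ≤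
      ∑ m, N m xstar / D m xstar := by
    refine Finset.sum_le_sum fun m _ => ?_
    have hd := hD m xstar hxstar
    have hs : Real.sqrt (N m xstar) ^ 2 = N m xstar := Real.sq_sqrt (hN m xstar hxstar)
    rw [le_div_iff₀ hd]
    nlinarith [hs, sq_nonneg (Real.sqrt (N m xstar) - y0 m * D m xstar)]
  calc ∑ m, N m x0 / D m x0
      = ∑ m, (2 * y0 m * Real.sqrt (N m x0) - (y0 m) ^ 2 * D m x0) := h1
    _ ≤ ∑ m, (2 * y0 m * Real.sqrt (N m xstar) - (y0 m) ^ 2 * D m xstar) := hmax x0 hx0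
    _ ≤ ∑ m, N m xstar / D m xstar := h2
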